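/- (Matrix instance of Lemma 2.1, Ky Fan duality.) For every a ∈ M_n(ℂ) and every k with 0 ≤ k ≤ n, the sum of the k largest singular values of a equals the supremum of |Tr(a·c)| over all matrices c ∈ M_n(ℂ) whose ℓ²-operator norm is at most 1 (equivalently, 1 - cᴴc is positive semidefinite) and whose rank is at most k. -/

import Mathlib

open scoped BigOperators ComplexOrder Matrix

/-- The singular values of a square complex matrix, i.e. the eigenvalues of
`(Aᴴ * A)^(1/2)`, arranged in decreasing order: `singularValues A 0` is the largest. -/
noncomputable def singularValues {m : ℕ} (A : Matrix (Fin m) (Fin m) ℂ) : Fin m → ℝ :=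
  fun i =>
    Real.sqrt
      (((Matrix.isHermitian_conjTranspose_mul_self A).eigenvalues ∘
        Tuple.sort (Matrix.isHermitian_conjTranspose_mul_self A).eigenvalues) i.rev)

/-- The sum of the `k` largest singular values of `A` (the Ky Fan `k`-norm). -/
noncomputable def kyFanSum {m : ℕ} (A : Matrix (Fin m) (Fin m) ℂ) (k : ℕ) : ℝ :=
  ∑ i ∈ Finset.univ.filter (fun i : Fin m => (i : ℕ) < k), singularValues A i

/-- The fractional power `b ^ θ` of a positive semidefinite matrix `b`, obtained by applying
`t ↦ t ^ θ` to the eigenvalues in a spectral decomposition. -/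
noncomputable def psdPow {m : ℕ} {b : Matrix (Fin m) (Fin m) ℂ} (hb : b.PosSemidef) (θ : ℝ) :
    Matrix (Fin m) (Fin m) ℂ :=
  (hb.isHermitian.eigenvectorUnitary : Matrix (Fin m) (Fin m) ℂ) *
    Matrix.diagonal (fun i => ((hb.isHermitian.eigenvalues i ^ θ : ℝ) : ℂ)) *
    (star hb.isHermitian.eigenvectorUnitary : Matrix (Fin m) (Fin m) ℂ)

namespace KyFanAux

open Matrix

variable {n : ℕ}

lemma psd_of_herm_idem {q : Matrix (Fin n) (Fin n) ℂ} (hq : q.IsHermitian) (h : q * q = q) :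
    q.PosSemidef := by
  have hq' : q = qᴴ * q := by rw [hq]; exact h.symm
  rw [hq']; exact posSemidef_conjTranspose_mul_self q

lemma one_sub_psd_of_herm_idem {q : Matrix (Fin n) (Fin n) ℂ} (hq : q.IsHermitian)
    (h : q * q = q) : (1 - q).PosSemidef := by
  apply psd_of_herm_idem
  · show (1 - q)ᴴ = 1 - q
    rw [conjTranspose_sub, conjTranspose_one, hq]
  · have e : (1 - q) * (1 - q) = 1 - q - q + q * q := by noncomm_ring
    rw [e, h]; abel

lemma mul_diag_eq {A : Matrix (Fin n) (Fin n) ℂ} {w d : Fin n → ℂ}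
    (h : Aᴴ * A = Matrix.diagonal w)
    (hz : ∀ i, star (1 - d i) * w i * (1 - d i) = 0) :
    A * Matrix.diagonal d = A := by
  have h1 : (1 : Matrix (Fin n) (Fin n) ℂ) - Matrix.diagonal d
      = Matrix.diagonal (fun i => 1 - d i) := by
    rw [← Matrix.diagonal_one, Matrix.diagonal_sub]
  have hN : A * (1 - Matrix.diagonal d) = 0 := by
    rw [← conjTranspose_mul_self_eq_zero]
    have e : (A * (1 - Matrix.diagonal d))ᴴ * (A * (1 - Matrix.diagonal d))
        = (1 - Matrix.diagonal d)ᴴ * (Aᴴ * A) * (1 - Matrix.diagonal d) := by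
      rw [conjTranspose_mul]; noncomm_ring
    rw [e, h, h1, Matrix.diagonal_conjTranspose, Matrix.diagonal_mul_diagonal,
      Matrix.diagonal_mul_diagonal]
    have e2 : (fun i => star (fun i => 1 - d i) i * w i * (1 - d i)) = fun _ : Fin n => (0:ℂ) := by
      funext i
      exact hz i
    rw [e2, Matrix.diagonal_zero]
  have := hN
  rw [mul_sub, mul_one, sub_eq_zero] at this
  exact this.symm

lemma U_mul_diag_eq {U : Matrix (Fin n) (Fin n) ℂ} {ε : Fin n → ℂ}
    (hε : ∀ i, ε i = 0 ∨ ε i = 1) (h : Uᴴ * U = Matrix.diagonal ε) :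
    U * Matrix.diagonal ε = U := by
  refine mul_diag_eq h (fun i => ?_)
  rcases hε i with h0 | h0 <;> simp [h0]

lemma one_sub_self_mul_conj_psd {U : Matrix (Fin n) (Fin n) ℂ} {ε : Fin n → ℂ}
    (hε : ∀ i, ε i = 0 ∨ ε i = 1) (h : Uᴴ * U = Matrix.diagonal ε) :
    (1 - U * Uᴴ).PosSemidef := by
  apply one_sub_psd_of_herm_idem
  · show (U * Uᴴ)ᴴ = U * Uᴴ
    rw [conjTranspose_mul, conjTranspose_conjTranspose]
  · calc U * Uᴴ * (U * Uᴴ) = U * (Uᴴ * U) * Uᴴ := by noncomm_ring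
    _ = U * Matrix.diagonal ε * Uᴴ := by rw [h]
    _ = U * Uᴴ := by rw [U_mul_diag_eq hε h]

lemma diagonal_congr {f g : Fin n → ℂ} (h : ∀ i, f i = g i) :
    Matrix.diagonal f = Matrix.diagonal g := by
  have : f = g := funext h
  rw [this]

lemma svd_exists (b : Matrix (Fin n) (Fin n) ℂ) :
    ∃ U V : Matrix (Fin n) (Fin n) ℂ,
      Vᴴ * V = 1 ∧ V * Vᴴ = 1 ∧
      Uᴴ * U = Matrix.diagonal (fun i =>
        if (Matrix.isHermitian_conjTranspose_mul_self b).eigenvalues i = 0 then (0:ℂ) else 1) ∧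
      b = U * Matrix.diagonal (fun i =>
        ((Real.sqrt ((Matrix.isHermitian_conjTranspose_mul_self b).eigenvalues i) : ℝ) : ℂ)) * Vᴴ ∧
      Vᴴ * (bᴴ * b) * V = Matrix.diagonal (fun i =>
        (((Matrix.isHermitian_conjTranspose_mul_self b).eigenvalues i : ℝ) : ℂ)) := by
  have hb := Matrix.isHermitian_conjTranspose_mul_self b
  set μ : Fin n → ℝ := hb.eigenvalues with hμdef
  have hμnn : ∀ i, 0 ≤ μ i := fun i =>
    (posSemidef_conjTranspose_mul_self b).eigenvalues_nonneg i
  set V : Matrix (Fin n) (Fin n) ℂ := (hb.eigenvectorUnitary : Matrix (Fin n) (Fin n) ℂ) with hVdef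
  have hV1 : Vᴴ * V = 1 := by
    rw [← star_eq_conjTranspose]
    exact Unitary.coe_star_mul_self hb.eigenvectorUnitary
  have hV2 : V * Vᴴ = 1 := by
    rw [← star_eq_conjTranspose]
    exact Unitary.coe_mul_star_self hb.eigenvectorUnitary
  have hspec : Vᴴ * (bᴴ * b) * V = Matrix.diagonal (fun i => ((μ i : ℝ) : ℂ)) := by
    rw [← star_eq_conjTranspose]
    simpa [Function.comp_def] using hb.conjStarAlgAut_star_eigenvectorUnitary
  set g : Fin n → ℂ := fun i => (((if μ i = 0 then 0 else (Real.sqrt (μ i))⁻¹ : ℝ)) : ℂ) with hgdef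
  set U : Matrix (Fin n) (Fin n) ℂ := b * V * Matrix.diagonal g with hUdef
  have hgstar : star g = g := by
    funext i
    simp [hgdef]
  have hUU : Uᴴ * U = Matrix.diagonal (fun i => if μ i = 0 then (0:ℂ) else 1) := by
    have e : Uᴴ * U = (Matrix.diagonal g)ᴴ * (Vᴴ * (bᴴ * b) * V) * Matrix.diagonal g := by
      rw [hUdef, conjTranspose_mul, conjTranspose_mul]; noncomm_ring
    rw [e, hspec, Matrix.diagonal_conjTranspose, hgstar, Matrix.diagonal_mul_diagonal,
      Matrix.diagonal_mul_diagonal]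
    apply diagonal_congr
    intro i
    by_cases h0 : μ i = 0
    · simp [hgdef, h0]
    · have hs : Real.sqrt (μ i) * Real.sqrt (μ i) = μ i := Real.mul_self_sqrt (hμnn i)
      have hs0 : Real.sqrt (μ i) ≠ 0 := by
        intro hz
        rw [hz, mul_zero] at hs
        exact h0 hs.symm
      have hr : ((Real.sqrt (μ i))⁻¹ * μ i * (Real.sqrt (μ i))⁻¹ : ℝ) = 1 := by
        have h2 : μ i = Real.sqrt (μ i) * Real.sqrt (μ i) := hs.symm
        calc ((Real.sqrt (μ i))⁻¹ * μ i * (Real.sqrt (μ i))⁻¹ : ℝ)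
            = (Real.sqrt (μ i))⁻¹ * (Real.sqrt (μ i) * Real.sqrt (μ i)) * (Real.sqrt (μ i))⁻¹ := by
              rw [← h2]
          _ = 1 := by field_simp
      simp only [hgdef, if_neg h0]
      rw [← Complex.ofReal_one, ← hr]
      push_cast
      ring
  have hbv : b * V * Matrix.diagonal (fun i => if μ i = 0 then (0:ℂ) else 1) = b * V := by
    refine mul_diag_eq (w := fun i => ((μ i : ℝ) : ℂ)) ?_ ?_
    · have e : (b * V)ᴴ * (b * V) = Vᴴ * (bᴴ * b) * V := by
        rw [conjTranspose_mul]; noncomm_ring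
      rw [e, hspec]
    · intro i
      by_cases h0 : μ i = 0 <;> simp [h0]
  refine ⟨U, V, hV1, hV2, hUU, ?_, hspec⟩
  have hgs : Matrix.diagonal g * Matrix.diagonal (fun i => ((Real.sqrt (μ i) : ℝ) : ℂ))
      = Matrix.diagonal (fun i => if μ i = 0 then (0:ℂ) else 1) := by
    rw [Matrix.diagonal_mul_diagonal]
    apply diagonal_congr
    intro i
    by_cases h0 : μ i = 0
    · simp [hgdef, h0]
    · have hs2 : Real.sqrt (μ i) * Real.sqrt (μ i) = μ i := Real.mul_self_sqrt (hμnn i)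
      have hs : Real.sqrt (μ i) ≠ 0 := by
        intro hz
        rw [hz, mul_zero] at hs2
        exact h0 hs2.symm
      have hr : ((Real.sqrt (μ i))⁻¹ * Real.sqrt (μ i) : ℝ) = 1 := by field_simp
      simp only [hgdef, if_neg h0]
      rw [← Complex.ofReal_one, ← hr]
      push_cast
      ring
  symm
  calc U * Matrix.diagonal (fun i => ((Real.sqrt (μ i) : ℝ) : ℂ)) * Vᴴ
      = b * V * (Matrix.diagonal g * Matrix.diagonal (fun i => ((Real.sqrt (μ i) : ℝ) : ℂ))) * Vᴴ := by
        rw [hUdef]; noncomm_ring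
    _ = b * V * Matrix.diagonal (fun i => if μ i = 0 then (0:ℂ) else 1) * Vᴴ := by rw [hgs]
    _ = b * V * Vᴴ := by rw [hbv]
    _ = b := by rw [mul_assoc, hV2, mul_one]

lemma psd_diag_entry {M : Matrix (Fin n) (Fin n) ℂ} (h : M.PosSemidef) (i : Fin n) :
    0 ≤ M i i := by
  exact h.diag_nonneg

lemma mul_conj_diag_entry (M : Matrix (Fin n) (Fin n) ℂ) (i : Fin n) :
    (M * Mᴴ) i i = ((∑ j, ‖M i j‖ ^ 2 : ℝ) : ℂ) := by
  rw [Matrix.mul_apply, Complex.ofReal_sum]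
  refine Finset.sum_congr rfl fun j _ => ?_
  rw [Matrix.conjTranspose_apply, Complex.sq_norm, ← Complex.mul_conj]
  rfl

lemma row_sum_sq_le_one {M : Matrix (Fin n) (Fin n) ℂ} (h : (1 - M * Mᴴ).PosSemidef)
    (i : Fin n) : ∑ j, ‖M i j‖ ^ 2 ≤ 1 := by
  have h0 := psd_diag_entry h i
  rw [Matrix.sub_apply, Matrix.one_apply_eq, mul_conj_diag_entry] at h0
  have : (0:ℂ) ≤ ((1 - ∑ j, ‖M i j‖ ^ 2 : ℝ) : ℂ) := by
    rw [Complex.ofReal_sub, Complex.ofReal_one]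
    exact h0
  rw [Complex.zero_le_real] at this
  linarith

lemma cs_aux {f g : Fin n → ℝ} (hf : ∑ j, f j ^ 2 ≤ 1) (hg : ∑ j, g j ^ 2 ≤ 1)
    (hf0 : ∀ j, 0 ≤ f j) (hg0 : ∀ j, 0 ≤ g j) : ∑ j, f j * g j ≤ 1 := by
  have h := Finset.sum_mul_sq_le_sq_mul_sq Finset.univ f g
  have hnn : 0 ≤ ∑ j, f j * g j :=
    Finset.sum_nonneg fun j _ => mul_nonneg (hf0 j) (hg0 j)
  have hf2 : 0 ≤ ∑ j, f j ^ 2 := Finset.sum_nonneg fun j _ => sq_nonneg _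
  nlinarith

lemma card_filter_lt (k : ℕ) (hk : k ≤ n) :
    (Finset.univ.filter (fun i : Fin n => (i : ℕ) < k)).card = k := by
  rw [← Finset.card_range k]
  apply Finset.card_bij (fun (i : Fin n) _ => (i : ℕ))
  · intro a ha
    simp only [Finset.mem_filter, Finset.mem_univ, true_and] at ha
    simpa using ha
  · intro a _ b _ hab
    exact Fin.val_injective hab
  · intro b hb
    simp only [Finset.mem_range] at hb
    exact ⟨⟨b, lt_of_lt_of_le hb hk⟩, by simp [hb], rfl⟩

lemma filter_ge_eq_image (k : ℕ) (hk : k ≤ n) :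
    Finset.univ.filter (fun i : Fin n => n - k ≤ (i : ℕ))
      = (Finset.univ.filter (fun i : Fin n => (i : ℕ) < k)).image Fin.rev := by
  ext i
  simp only [Finset.mem_filter, Finset.mem_image, Finset.mem_univ, true_and]
  constructor
  · intro h
    refine ⟨i.rev, ?_, Fin.rev_rev i⟩
    have h1 := i.isLt
    rw [Fin.val_rev]
    omega
  · rintro ⟨j, hj, rfl⟩
    have := j.isLt
    rw [Fin.val_rev]
    omega

lemma card_filter_ge (k : ℕ) (hk : k ≤ n) :
    (Finset.univ.filter (fun i : Fin n => n - k ≤ (i : ℕ))).card = k := by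
  rw [filter_ge_eq_image k hk, Finset.card_image_of_injective _ Fin.rev_injective,
    card_filter_lt k hk]

lemma sum_rev_filter (f : Fin n → ℝ) (k : ℕ) (hk : k ≤ n) :
    ∑ i ∈ Finset.univ.filter (fun i : Fin n => (i : ℕ) < k), f i.rev
      = ∑ i ∈ Finset.univ.filter (fun i : Fin n => n - k ≤ (i : ℕ)), f i := by
  rw [filter_ge_eq_image k hk,
    Finset.sum_image (fun x _ y _ h => Fin.rev_injective h)]

lemma sum_mul_le_topk {k : ℕ} (hk : k ≤ n) (f t : Fin n → ℝ) (hf : Monotone f)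
    (hf0 : ∀ i, 0 ≤ f i) (ht0 : ∀ i, 0 ≤ t i) (ht1 : ∀ i, t i ≤ 1)
    (htk : ∑ i, t i ≤ (k : ℝ)) :
    ∑ i, f i * t i ≤ ∑ i ∈ Finset.univ.filter (fun i : Fin n => n - k ≤ (i : ℕ)), f i := by
  rcases Nat.eq_zero_or_pos k with rfl | hkpos
  · have h1 : ∑ i, t i = 0 :=
      le_antisymm (by simpa using htk) (Finset.sum_nonneg fun i _ => ht0 i)
    have hz : ∀ i ∈ Finset.univ, t i = 0 :=
      (Finset.sum_eq_zero_iff_of_nonneg (fun i _ => ht0 i)).mp h1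
    rw [Finset.sum_congr rfl (fun i hi => by rw [hz i hi, mul_zero]), Finset.sum_const_zero]
    exact Finset.sum_nonneg fun i _ => hf0 i
  · have hn : 0 < n := lt_of_lt_of_le hkpos hk
    set T : Finset (Fin n) := Finset.univ.filter (fun i : Fin n => n - k ≤ (i : ℕ)) with hT
    set j0 : Fin n := ⟨n - k, by omega⟩ with hj0
    set s : ℝ := f j0 with hsdef
    have hs0 : 0 ≤ s := hf0 j0
    have key : ∀ i : Fin n, f i * t i ≤ (if n - k ≤ (i : ℕ) then f i - s else 0) + s * t i := by
      intro i
      by_cases hc : n - k ≤ (i : ℕ)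
      · have hfi : s ≤ f i := hf (show j0 ≤ i from by rw [Fin.le_def]; exact hc)
        rw [if_pos hc]
        nlinarith [ht1 i, ht0 i]
      · have hfi : f i ≤ s := hf (show i ≤ j0 from by
          rw [Fin.le_def]
          show (i : ℕ) ≤ n - k
          omega)
        rw [if_neg hc]
        have := mul_le_mul_of_nonneg_right hfi (ht0 i)
        linarith
    have hcard : T.card = k := card_filter_ge (n := n) k hk
    calc ∑ i, f i * t i
        ≤ ∑ i : Fin n, ((if n - k ≤ (i : ℕ) then f i - s else 0) + s * t i) :=
          Finset.sum_le_sum fun i _ => key i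
      _ = (∑ i ∈ T, (f i - s)) + s * ∑ i, t i := by
          rw [Finset.sum_add_distrib, ← Finset.mul_sum]
          congr 1
          exact (Finset.sum_filter (fun i : Fin n => n - k ≤ (i : ℕ)) (fun i => f i - s)).symm
      _ ≤ ((∑ i ∈ T, f i) - k * s) + s * k := by
          rw [Finset.sum_sub_distrib, Finset.sum_const, hcard, nsmul_eq_mul]
          have h2 : s * ∑ i, t i ≤ s * k := mul_le_mul_of_nonneg_left htk hs0
          linarith
      _ = ∑ i ∈ T, f i := by ring

lemma kyFanSum_eq_sorted (a : Matrix (Fin n) (Fin n) ℂ) (k : ℕ) (hk : k ≤ n) :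
    kyFanSum a k = ∑ i ∈ Finset.univ.filter (fun i : Fin n => n - k ≤ (i : ℕ)),
      Real.sqrt ((Matrix.isHermitian_conjTranspose_mul_self a).eigenvalues
        ((Tuple.sort (Matrix.isHermitian_conjTranspose_mul_self a).eigenvalues) i)) := by
  set μ := (Matrix.isHermitian_conjTranspose_mul_self a).eigenvalues with hμ
  set τ := Tuple.sort μ with hτ
  have h1 : kyFanSum a k = ∑ i ∈ Finset.univ.filter (fun i : Fin n => (i : ℕ) < k),
      (fun j => Real.sqrt (μ (τ j))) i.rev := rfl
  rw [h1, sum_rev_filter (fun j => Real.sqrt (μ (τ j))) k hk]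

lemma kyFanSum_eq_filter (a : Matrix (Fin n) (Fin n) ℂ) (k : ℕ) (hk : k ≤ n) :
    kyFanSum a k = ∑ i ∈ Finset.univ.filter (fun i : Fin n =>
        n - k ≤ (((Tuple.sort (Matrix.isHermitian_conjTranspose_mul_self a).eigenvalues).symm i
          : Fin n) : ℕ)),
      Real.sqrt ((Matrix.isHermitian_conjTranspose_mul_self a).eigenvalues i) := by
  set μ := (Matrix.isHermitian_conjTranspose_mul_self a).eigenvalues with hμ
  set τ := Tuple.sort μ with hτ
  rw [kyFanSum_eq_sorted a k hk, ← hμ, ← hτ]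
  refine Finset.sum_nbij' (fun j => τ j) (fun i => τ.symm i) ?_ ?_ ?_ ?_ ?_
  · intro a ha
    simp only [Finset.mem_filter, Finset.mem_univ, true_and] at ha ⊢
    simpa using ha
  · intro b hb
    simp only [Finset.mem_filter, Finset.mem_univ, true_and] at hb ⊢
    exact hb
  · intro a _
    simp
  · intro b _
    simp
  · intro a _
    rfl

lemma attain (a : Matrix (Fin n) (Fin n) ℂ) (k : ℕ) (hk : k ≤ n) :
    ∃ c : Matrix (Fin n) (Fin n) ℂ, (1 - cᴴ * c).PosSemidef ∧ c.rank ≤ k ∧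
      kyFanSum a k = ‖(a * c).trace‖ := by
  obtain ⟨U, V, hV1, hV2, hUU, hsvd, hspeca⟩ := svd_exists a
  set μ := (Matrix.isHermitian_conjTranspose_mul_self a).eigenvalues with hμ
  set τ := Tuple.sort μ with hτ
  have hμnn : ∀ i, 0 ≤ μ i := fun i =>
    (posSemidef_conjTranspose_mul_self a).eigenvalues_nonneg i
  set η : Fin n → ℂ := fun i => if n - k ≤ ((τ.symm i : Fin n) : ℕ) then 1 else 0 with hη
  have hη01 : ∀ i, η i = 0 ∨ η i = 1 := fun i => by
    have hdef : η i = if n - k ≤ ((τ.symm i : Fin n) : ℕ) then (1:ℂ) else 0 := rfl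
    by_cases h : n - k ≤ ((τ.symm i : Fin n) : ℕ)
    · exact Or.inr (by rw [hdef, if_pos h])
    · exact Or.inl (by rw [hdef, if_neg h])
  have hηstar : star η = η := by
    funext i
    show star (η i) = η i
    rcases hη01 i with h | h <;> rw [h] <;> simp
  have hε01 : ∀ i, (if μ i = 0 then (0:ℂ) else 1) = 0 ∨ (if μ i = 0 then (0:ℂ) else 1) = 1 := by
    intro i; by_cases h : μ i = 0 <;> simp [h]
  set c := V * Matrix.diagonal η * Uᴴ with hc
  have hcc : cᴴ * c = U * Matrix.diagonal η * Uᴴ := by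
    have : cᴴ = U * Matrix.diagonal η * Vᴴ := by
      rw [hc, conjTranspose_mul, conjTranspose_mul, conjTranspose_conjTranspose,
        Matrix.diagonal_conjTranspose, hηstar]
      noncomm_ring
    rw [this, hc]
    calc U * Matrix.diagonal η * Vᴴ * (V * Matrix.diagonal η * Uᴴ)
        = U * Matrix.diagonal η * (Vᴴ * V) * Matrix.diagonal η * Uᴴ := by noncomm_ring
      _ = U * (Matrix.diagonal η * Matrix.diagonal η) * Uᴴ := by rw [hV1]; noncomm_ring
      _ = U * Matrix.diagonal η * Uᴴ := by
          rw [Matrix.diagonal_mul_diagonal,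
            diagonal_congr (g := η) (fun i => by rcases hη01 i with h | h <;> rw [h] <;> ring)]
  have hpsd : (1 - cᴴ * c).PosSemidef := by
    have hUUps : (1 - U * Uᴴ).PosSemidef := one_sub_self_mul_conj_psd hε01 hUU
    have hD : Matrix.diagonal (fun i => 1 - η i) *
        (Matrix.diagonal (fun i => 1 - η i))ᴴ = Matrix.diagonal (fun i => 1 - η i) := by
      rw [Matrix.diagonal_conjTranspose, Matrix.diagonal_mul_diagonal]
      apply diagonal_congr
      intro i
      show (1 - η i) * star (1 - η i) = 1 - η i
      rcases hη01 i with h | h <;> rw [h] <;> simp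
    have h2 : (U * Matrix.diagonal (fun i => 1 - η i) * Uᴴ).PosSemidef := by
      have : U * Matrix.diagonal (fun i => 1 - η i) * Uᴴ
          = (U * Matrix.diagonal (fun i => 1 - η i)) *
            (U * Matrix.diagonal (fun i => 1 - η i))ᴴ := by
        rw [conjTranspose_mul]
        calc U * Matrix.diagonal (fun i => 1 - η i) * Uᴴ
            = U * (Matrix.diagonal (fun i => 1 - η i) *
              (Matrix.diagonal (fun i => 1 - η i))ᴴ) * Uᴴ := by rw [hD]
          _ = U * Matrix.diagonal (fun i => 1 - η i) *
              ((Matrix.diagonal (fun i => 1 - η i))ᴴ * Uᴴ) := by noncomm_ring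
      rw [this]
      exact posSemidef_self_mul_conjTranspose _
    have hsum : 1 - cᴴ * c = (1 - U * Uᴴ) + U * Matrix.diagonal (fun i => 1 - η i) * Uᴴ := by
      rw [hcc]
      have : Matrix.diagonal (fun i => 1 - η i)
          = 1 - Matrix.diagonal η := by rw [← Matrix.diagonal_one, Matrix.diagonal_sub]
      rw [this]
      noncomm_ring
    rw [hsum]
    exact hUUps.add h2
  have hrank : c.rank ≤ k := by
    have h1 : c.rank ≤ (Matrix.diagonal η).rank := by
      calc c.rank ≤ (V * Matrix.diagonal η).rank := Matrix.rank_mul_le_left _ _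
        _ ≤ (Matrix.diagonal η).rank := Matrix.rank_mul_le_right _ _
    have h2 : (Matrix.diagonal η).rank = (Finset.univ.filter (fun i => η i ≠ 0)).card := by
      rw [Matrix.rank_diagonal, Fintype.card_subtype]
    have h3 : Finset.univ.filter (fun i => η i ≠ 0)
        = Finset.univ.filter (fun i : Fin n => n - k ≤ ((τ.symm i : Fin n) : ℕ)) := by
      ext i
      simp only [Finset.mem_filter, Finset.mem_univ, true_and, hη]
      by_cases h : n - k ≤ ((τ.symm i : Fin n) : ℕ) <;> simp [h]
    have h4 : (Finset.univ.filter (fun i : Fin n => n - k ≤ ((τ.symm i : Fin n) : ℕ))).card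
        = (Finset.univ.filter (fun i : Fin n => n - k ≤ (i : ℕ))).card := by
      refine Finset.card_nbij (fun i => τ.symm i) ?_ ?_ ?_
      · intro x hx
        simp only [Finset.mem_filter, Finset.mem_univ, true_and] at hx ⊢
        simpa using hx
      · intro x hx y hy hxy
        exact τ.symm.injective hxy
      · intro y hy
        simp only [Finset.mem_coe, Finset.mem_filter, Finset.mem_univ, true_and,
          Set.mem_image] at hy ⊢
        exact ⟨τ y, by simpa using hy, by simp⟩
    calc c.rank ≤ (Matrix.diagonal η).rank := h1
      _ = k := by rw [h2, h3, h4, card_filter_ge k hk]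
      _ ≤ k := le_refl k
  refine ⟨c, hpsd, hrank, ?_⟩
  have hd2 : Matrix.diagonal (fun i => ((Real.sqrt (μ i) : ℝ) : ℂ)) * Matrix.diagonal η
      = Matrix.diagonal (fun i => ((Real.sqrt (μ i) : ℝ) : ℂ) * η i) :=
    Matrix.diagonal_mul_diagonal _ _
  have hac : a * c = U * Matrix.diagonal (fun i => ((Real.sqrt (μ i) : ℝ) : ℂ) * η i) * Uᴴ := by
    rw [hc, hsvd]
    calc (U * Matrix.diagonal (fun i => ((Real.sqrt (μ i) : ℝ) : ℂ)) * Vᴴ) *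
          (V * Matrix.diagonal η * Uᴴ)
        = U * (Matrix.diagonal (fun i => ((Real.sqrt (μ i) : ℝ) : ℂ)) *
            ((Vᴴ * V) * Matrix.diagonal η)) * Uᴴ := by noncomm_ring
      _ = U * (Matrix.diagonal (fun i => ((Real.sqrt (μ i) : ℝ) : ℂ)) *
            Matrix.diagonal η) * Uᴴ := by rw [hV1, one_mul]
      _ = _ := by rw [hd2]
  have htr : (a * c).trace
      = ∑ i, (if μ i = 0 then (0:ℂ) else 1) * (((Real.sqrt (μ i) : ℝ) : ℂ) * η i) := by
    rw [hac, Matrix.trace_mul_cycle, hUU, Matrix.diagonal_mul_diagonal, Matrix.trace_diagonal]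
  have hval : (a * c).trace = ((∑ i ∈ Finset.univ.filter
      (fun i : Fin n => n - k ≤ ((τ.symm i : Fin n) : ℕ)), Real.sqrt (μ i) : ℝ) : ℂ) := by
    rw [htr, Complex.ofReal_sum, Finset.sum_filter]
    refine Finset.sum_congr rfl fun i _ => ?_
    by_cases h : n - k ≤ ((τ.symm i : Fin n) : ℕ)
    · have hηi : η i = 1 := if_pos h
      rw [if_pos h, hηi, mul_one]
      by_cases h0 : μ i = 0
      · simp [h0]
      · rw [if_neg h0, one_mul]
    · have hηi : η i = 0 := if_neg h
      rw [if_neg h, hηi, mul_zero, mul_zero]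
  rw [kyFanSum_eq_filter a k hk, ← hμ, ← hτ, hval, Complex.norm_real, Real.norm_eq_abs,
    abs_of_nonneg (Finset.sum_nonneg fun i _ => Real.sqrt_nonneg _)]

lemma one_sub_diag_psd {ε : Fin n → ℂ} (hε : ∀ i, ε i = 0 ∨ ε i = 1) :
    (1 - Matrix.diagonal ε).PosSemidef := by
  rw [← Matrix.diagonal_one, Matrix.diagonal_sub, Matrix.posSemidef_diagonal_iff]
  intro i
  rcases hε i with h | h <;> rw [h] <;> simp

lemma bound (a : Matrix (Fin n) (Fin n) ℂ) (k : ℕ) (hk : k ≤ n)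
    (c : Matrix (Fin n) (Fin n) ℂ) (hcon : (1 - cᴴ * c).PosSemidef) (hrk : c.rank ≤ k) :
    ‖(a * c).trace‖ ≤ kyFanSum a k := by
  obtain ⟨U, V, hV1, hV2, hUU, hsvd, hspeca⟩ := svd_exists a
  obtain ⟨Z, W, hW1, hW2, hZZ, hcsvd, hspecc⟩ := svd_exists c
  set μ := (Matrix.isHermitian_conjTranspose_mul_self a).eigenvalues with hμ
  set ν := (Matrix.isHermitian_conjTranspose_mul_self c).eigenvalues with hν
  set τ := Tuple.sort μ with hτ
  have hμnn : ∀ i, 0 ≤ μ i := fun i =>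
    (posSemidef_conjTranspose_mul_self a).eigenvalues_nonneg i
  have hνnn : ∀ i, 0 ≤ ν i := fun i =>
    (posSemidef_conjTranspose_mul_self c).eigenvalues_nonneg i
  have hεa01 : ∀ i, (if μ i = 0 then (0:ℂ) else 1) = 0 ∨ (if μ i = 0 then (0:ℂ) else 1) = 1 := by
    intro i; by_cases h : μ i = 0 <;> simp [h]
  have hεc01 : ∀ i, (if ν i = 0 then (0:ℂ) else 1) = 0 ∨ (if ν i = 0 then (0:ℂ) else 1) = 1 := by
    intro i; by_cases h : ν i = 0 <;> simp [h]
  have hν1 : ∀ j, ν j ≤ 1 := by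
    intro j
    have hps := hcon.conjTranspose_mul_mul_same W
    have e : Wᴴ * (1 - cᴴ * c) * W = 1 - Matrix.diagonal (fun i => ((ν i : ℝ) : ℂ)) := by
      have e2 : Wᴴ * (1 - cᴴ * c) * W = Wᴴ * W - Wᴴ * (cᴴ * c) * W := by noncomm_ring
      rw [e2, hW1, hspecc]
    rw [e] at hps
    have h0 := psd_diag_entry hps j
    rw [Matrix.sub_apply, Matrix.one_apply_eq, Matrix.diagonal_apply_eq] at h0
    have h1 : (0:ℂ) ≤ ((1 - ν j : ℝ) : ℂ) := by
      rw [Complex.ofReal_sub, Complex.ofReal_one]; exact h0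
    rw [Complex.zero_le_real] at h1
    linarith
  have hs1 : ∀ j, Real.sqrt (ν j) ≤ 1 := by
    intro j
    rw [show (1:ℝ) = Real.sqrt 1 from (Real.sqrt_one).symm]
    exact Real.sqrt_le_sqrt (hν1 j)
  have hcard : ((Finset.univ.filter (fun j : Fin n => ν j ≠ 0)).card : ℝ) ≤ (k : ℝ) := by
    have h1 : (cᴴ * c).rank = Fintype.card {i // ν i ≠ 0} :=
      (Matrix.isHermitian_conjTranspose_mul_self c).rank_eq_card_non_zero_eigs
    have h2 : (cᴴ * c).rank = c.rank := c.rank_conjTranspose_mul_self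
    rw [Fintype.card_subtype] at h1
    have h3 : (Finset.univ.filter (fun j : Fin n => ν j ≠ 0)).card ≤ k := by omega
    exact_mod_cast h3
  set P := Vᴴ * Z with hP
  set Q := Wᴴ * U with hQ
  have hPP : (1 - P * Pᴴ).PosSemidef := by
    have hZps : (1 - Z * Zᴴ).PosSemidef := one_sub_self_mul_conj_psd hεc01 hZZ
    have e : Vᴴ * (1 - Z * Zᴴ) * V = 1 - P * Pᴴ := by
      have e2 : Vᴴ * (1 - Z * Zᴴ) * V = Vᴴ * V - Vᴴ * Z * (Zᴴ * V) := by noncomm_ring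
      rw [e2, hV1, hP, conjTranspose_mul, conjTranspose_conjTranspose]
    rw [← e]
    exact hZps.conjTranspose_mul_mul_same V
  have hPtP : (1 - Pᴴ * P).PosSemidef := by
    have e : Pᴴ * P = Matrix.diagonal (fun i => if ν i = 0 then (0:ℂ) else 1) := by
      rw [hP, conjTranspose_mul, conjTranspose_conjTranspose, ← hZZ]
      calc Zᴴ * V * (Vᴴ * Z) = Zᴴ * (V * Vᴴ) * Z := by noncomm_ring
        _ = Zᴴ * Z := by rw [hV2]; noncomm_ring
    rw [e]
    exact one_sub_diag_psd hεc01
  have hQtQ : (1 - Qᴴ * Q).PosSemidef := by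
    have e : Qᴴ * Q = Matrix.diagonal (fun i => if μ i = 0 then (0:ℂ) else 1) := by
      rw [hQ, conjTranspose_mul, conjTranspose_conjTranspose, ← hUU]
      calc Uᴴ * W * (Wᴴ * U) = Uᴴ * (W * Wᴴ) * U := by noncomm_ring
        _ = Uᴴ * U := by rw [hW2]; noncomm_ring
    rw [e]
    exact one_sub_diag_psd hεa01
  have hQQ : (1 - Q * Qᴴ).PosSemidef := by
    have hUps : (1 - U * Uᴴ).PosSemidef := one_sub_self_mul_conj_psd hεa01 hUU
    have e : Wᴴ * (1 - U * Uᴴ) * W = 1 - Q * Qᴴ := by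
      have e2 : Wᴴ * (1 - U * Uᴴ) * W = Wᴴ * W - Wᴴ * U * (Uᴴ * W) := by noncomm_ring
      rw [e2, hW1, hQ, conjTranspose_mul, conjTranspose_conjTranspose]
    rw [← e]
    exact hUps.conjTranspose_mul_mul_same W
  have hA : ∀ i, ∑ j, ‖P i j‖ ^ 2 ≤ 1 := fun i => row_sum_sq_le_one hPP i
  have hD : ∀ j, ∑ i, ‖Q j i‖ ^ 2 ≤ 1 := fun j => row_sum_sq_le_one hQQ j
  have hB : ∀ i, ∑ j, ‖Q j i‖ ^ 2 ≤ 1 := by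
    intro i
    have h0 : (1 - Qᴴ * (Qᴴ)ᴴ).PosSemidef := by
      rw [conjTranspose_conjTranspose]; exact hQtQ
    have := row_sum_sq_le_one h0 i
    simpa [Matrix.conjTranspose_apply] using this
  have hC : ∀ j, ∑ i, ‖P i j‖ ^ 2 ≤ 1 := by
    intro j
    have h0 : (1 - Pᴴ * (Pᴴ)ᴴ).PosSemidef := by
      rw [conjTranspose_conjTranspose]; exact hPtP
    have := row_sum_sq_le_one h0 j
    simpa [Matrix.conjTranspose_apply] using this
  have hac : a * c = U * (Matrix.diagonal (fun i => ((Real.sqrt (μ i) : ℝ) : ℂ)) * P *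
      Matrix.diagonal (fun j => ((Real.sqrt (ν j) : ℝ) : ℂ)) * Wᴴ) := by
    rw [hsvd, hcsvd, hP]
    noncomm_ring
  have htrace : (a * c).trace = ∑ i, ((Real.sqrt (μ i) : ℝ) : ℂ) *
      ∑ j, P i j * ((Real.sqrt (ν j) : ℝ) : ℂ) * Q j i := by
    rw [hac, Matrix.trace_mul_comm]
    have e : Matrix.diagonal (fun i => ((Real.sqrt (μ i) : ℝ) : ℂ)) * P *
        Matrix.diagonal (fun j => ((Real.sqrt (ν j) : ℝ) : ℂ)) * Wᴴ * U
        = Matrix.diagonal (fun i => ((Real.sqrt (μ i) : ℝ) : ℂ)) *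
          (P * Matrix.diagonal (fun j => ((Real.sqrt (ν j) : ℝ) : ℂ)) * Q) := by
      rw [hQ]; noncomm_ring
    rw [e, Matrix.trace]
    refine Finset.sum_congr rfl fun i _ => ?_
    rw [Matrix.diag_apply, Matrix.diagonal_mul]
    congr 1
    rw [Matrix.mul_apply]
    refine Finset.sum_congr rfl fun j _ => ?_
    rw [Matrix.mul_diagonal]
  set t : Fin n → ℝ :=
    fun i => ∑ j, Real.sqrt (ν j) * (‖P i j‖ * ‖Q j i‖) with ht
  have ht0 : ∀ i, 0 ≤ t i := fun i => Finset.sum_nonneg fun j _ =>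
    mul_nonneg (Real.sqrt_nonneg _) (mul_nonneg (norm_nonneg _) (norm_nonneg _))
  have habs : ‖(a * c).trace‖ ≤ ∑ i, Real.sqrt (μ i) * t i := by
    rw [htrace]
    refine le_trans (norm_sum_le _ _) (Finset.sum_le_sum fun i _ => ?_)
    rw [norm_mul, Complex.norm_real, Real.norm_eq_abs, abs_of_nonneg (Real.sqrt_nonneg _)]
    refine mul_le_mul_of_nonneg_left ?_ (Real.sqrt_nonneg _)
    refine le_trans (norm_sum_le _ _) ?_
    refine Finset.sum_le_sum fun j _ => ?_
    rw [norm_mul, norm_mul, Complex.norm_real, Real.norm_eq_abs, abs_of_nonneg (Real.sqrt_nonneg _)]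
    exact le_of_eq (by ring)
  have ht1 : ∀ i, t i ≤ 1 := by
    intro i
    have step : t i ≤ ∑ j, ‖P i j‖ * ‖Q j i‖ := by
      refine Finset.sum_le_sum fun j _ => ?_
      exact mul_le_of_le_one_left
        (mul_nonneg (norm_nonneg _) (norm_nonneg _)) (hs1 j)
    exact step.trans (cs_aux (hA i) (hB i) (fun j => norm_nonneg _)
      (fun j => norm_nonneg _))
  have htk : ∑ i, t i ≤ (k : ℝ) := by
    have swap : ∑ i, t i
        = ∑ j, Real.sqrt (ν j) * ∑ i, ‖P i j‖ * ‖Q j i‖ := by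
      rw [Finset.sum_comm]
      exact Finset.sum_congr rfl fun j _ => (Finset.mul_sum _ _ _).symm
    rw [swap]
    calc ∑ j, Real.sqrt (ν j) * ∑ i, ‖P i j‖ * ‖Q j i‖
        ≤ ∑ j, Real.sqrt (ν j) * 1 := by
          refine Finset.sum_le_sum fun j _ => ?_
          exact mul_le_mul_of_nonneg_left (cs_aux (hC j) (hD j)
            (fun i => norm_nonneg _) (fun i => norm_nonneg _)) (Real.sqrt_nonneg _)
      _ = ∑ j, Real.sqrt (ν j) := by simp
      _ ≤ ∑ j, (if ν j ≠ 0 then (1:ℝ) else 0) := by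
          refine Finset.sum_le_sum fun j _ => ?_
          by_cases h : ν j = 0
          · simp [h]
          · simpa [h] using hs1 j
      _ = ((Finset.univ.filter (fun j : Fin n => ν j ≠ 0)).card : ℝ) := Finset.sum_boole _ _
      _ ≤ (k : ℝ) := hcard
  have hmono : Monotone (fun i : Fin n => Real.sqrt (μ (τ i))) := fun i j hij =>
    Real.sqrt_le_sqrt (Tuple.monotone_sort μ hij)
  have htk' : ∑ i, t (τ i) ≤ (k : ℝ) := by
    rw [Equiv.sum_comp τ t]
    exact htk
  have final := sum_mul_le_topk hk (fun i => Real.sqrt (μ (τ i))) (fun i => t (τ i)) hmono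
    (fun i => Real.sqrt_nonneg _) (fun i => ht0 _) (fun i => ht1 _) htk'
  calc ‖(a * c).trace‖ ≤ ∑ i, Real.sqrt (μ i) * t i := habs
    _ = ∑ i, Real.sqrt (μ (τ i)) * t (τ i) :=
        (Equiv.sum_comp τ (fun i => Real.sqrt (μ i) * t i)).symm
    _ ≤ ∑ i ∈ Finset.univ.filter (fun i : Fin n => n - k ≤ (i : ℕ)), Real.sqrt (μ (τ i)) := final
    _ = kyFanSum a k := by rw [kyFanSum_eq_sorted a k hk, ← hμ, ← hτ]

end KyFanAux

/-- Matrix instance of Lemma 2.1 (Ky Fan duality): the sum of the `k` largest singular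
values of `a` equals the supremum of `|Tr (a * c)|` over contractions `c`
(i.e. `1 - cᴴ * c` positive semidefinite) of rank at most `k`. -/
theorem stmt_6 {n : ℕ} (a : Matrix (Fin n) (Fin n) ℂ) (k : ℕ) (hk : k ≤ n) :
    kyFanSum a k =
      sSup {x : ℝ | ∃ c : Matrix (Fin n) (Fin n) ℂ,
        (1 - cᴴ * c).PosSemidef ∧ c.rank ≤ k ∧ x = ‖(a * c).trace‖} := by
  symm
  apply IsGreatest.csSup_eq
  constructor
  · obtain ⟨c, h1, h2, h3⟩ := KyFanAux.attain a k hk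
    exact ⟨c, h1, h2, h3⟩
  · rintro x ⟨c, h1, h2, rfl⟩
    exact KyFanAux.bound a k hk c h1 h2
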